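/- For every n ≥ 1, if a unitary U ∈ U(2^n) has the property that for every P in the n-qubit Pauli group P_n the group commutator U P U⁻¹ P⁻¹ is a scalar multiple of the identity matrix, then U itself is a scalar multiple of an element of P_n; that is, U = c·Q for some complex number c of modulus 1 and some Q ∈ P_n. -/

import Mathlib

/-- The matrix of the Pauli `X` operator acting on the `j`-th qubit of `n` qubits
(and as the identity on all other tensor factors). -/
noncomputable def XMat (n : ℕ) (j : Fin n) :
    Matrix (Fin n → Fin 2) (Fin n → Fin 2) ℂ :=
  Matrix.of fun v w => if v j ≠ w j ∧ ∀ i, i ≠ j → v i = w i then 1 else 0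

/-- The matrix of the Pauli `Z` operator acting on the `j`-th qubit of `n` qubits
(and as the identity on all other tensor factors). -/
noncomputable def ZMat (n : ℕ) (j : Fin n) :
    Matrix (Fin n → Fin 2) (Fin n → Fin 2) ℂ :=
  Matrix.of fun v w => if v = w then (if v j = 1 then -1 else 1) else 0

/-- The `n`-qubit Pauli group: the subgroup of the unitary group `U(2^n)` generated by
`i·I` together with `X_j` and `Z_j` for each qubit `j`. -/
noncomputable def PauliGroup (n : ℕ) :
    Subgroup (Matrix.unitaryGroup (Fin n → Fin 2) ℂ) :=
  Subgroup.closure { U : Matrix.unitaryGroup (Fin n → Fin 2) ℂ |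
    (U : Matrix (Fin n → Fin 2) (Fin n → Fin 2) ℂ)
        = Complex.I • (1 : Matrix (Fin n → Fin 2) (Fin n → Fin 2) ℂ)
    ∨ ∃ j : Fin n, (U : Matrix (Fin n → Fin 2) (Fin n → Fin 2) ℂ) = XMat n j
        ∨ (U : Matrix (Fin n → Fin 2) (Fin n → Fin 2) ℂ) = ZMat n j }

namespace PauliAux

variable {n : ℕ}

abbrev V (n : ℕ) := Fin n → Fin 2

-- basic Fin 2 facts
lemma fin2_add11 (x : Fin 2) : x + 1 + 1 = x := by revert x; decide
lemma fin2_ne_iff (x y : Fin 2) : x ≠ y ↔ y = x + 1 := by revert x y; decide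
lemma fin2_add1_ne (x : Fin 2) : x + 1 ≠ x := by revert x; decide

/-- flipping the coordinates in `S` -/
def sOf (S : Finset (Fin n)) : Equiv.Perm (V n) :=
  Function.Involutive.toPerm (fun v i => if i ∈ S then v i + 1 else v i)
    (by intro v; funext i; by_cases h : i ∈ S <;> simp [h, fin2_add11])

@[simp] lemma sOf_apply (S : Finset (Fin n)) (v : V n) (i : Fin n) :
    sOf S v i = if i ∈ S then v i + 1 else v i := rfl

@[simp] lemma sOf_symm (S : Finset (Fin n)) : (sOf S).symm = sOf S := rfl

lemma sOf_sOf (S : Finset (Fin n)) (v : V n) : sOf S (sOf S v) = v :=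
  (sOf S).symm_apply_apply v

lemma sOf_trans_self (S : Finset (Fin n)) : (sOf S).trans (sOf S) = Equiv.refl _ :=
  Equiv.ext fun v => sOf_sOf S v

lemma sOf_trans_comm (S S' : Finset (Fin n)) :
    (sOf S).trans (sOf S') = (sOf S').trans (sOf S) := by
  apply Equiv.ext; intro v; funext i
  simp only [Equiv.trans_apply, sOf_apply]
  by_cases h : i ∈ S <;> by_cases h' : i ∈ S' <;> simp [h, h']

lemma sOf_empty : sOf (∅ : Finset (Fin n)) = Equiv.refl _ := by
  apply Equiv.ext; intro v; funext i; simp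

lemma sOf_insert {a : Fin n} {S : Finset (Fin n)} (ha : a ∉ S) :
    sOf (insert a S) = (sOf {a}).trans (sOf S) := by
  apply Equiv.ext; intro v; funext i
  simp only [Equiv.trans_apply, sOf_apply, Finset.mem_insert, Finset.mem_singleton]
  by_cases hia : i = a
  · subst hia; simp [ha]
  · by_cases hiS : i ∈ S <;> simp [hia, hiS]

/-- generalized (signed) permutation matrix -/
noncomputable def GP (σ : Equiv.Perm (V n)) (f : V n → ℂ) : Matrix (V n) (V n) ℂ :=
  Matrix.of fun v w => if w = σ v then f v else 0

lemma GP_apply (σ : Equiv.Perm (V n)) (f : V n → ℂ) (v w : V n) :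
    GP σ f v w = if w = σ v then f v else 0 := rfl

lemma GP_mul (σ τ : Equiv.Perm (V n)) (f g : V n → ℂ) :
    GP σ f * GP τ g = GP (σ.trans τ) (fun v => f v * g (σ v)) := by
  ext v w
  simp only [GP, Matrix.mul_apply, Matrix.of_apply, Equiv.trans_apply]
  rw [Finset.sum_eq_single (σ v)]
  · simp [eq_comm]; congr
  · intro u _ hu
    rw [if_neg hu, zero_mul]
  · intro h; exact absurd (Finset.mem_univ _) h

lemma GP_refl_one : GP (Equiv.refl (V n)) (fun _ => (1:ℂ)) = 1 := by
  ext v w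
  simp [GP_apply, Matrix.one_apply, eq_comm]

lemma GP_congr {σ τ : Equiv.Perm (V n)} {f g : V n → ℂ} (h1 : σ = τ) (h2 : ∀ v, f v = g v) :
    GP σ f = GP τ g := by
  subst h1; ext v w; simp [GP_apply, h2]

lemma smul_GP (c : ℂ) (σ : Equiv.Perm (V n)) (f : V n → ℂ) :
    c • GP σ f = GP σ (fun v => c * f v) := by
  ext v w; simp [GP_apply, Matrix.smul_apply, mul_ite]

lemma star_GP (σ : Equiv.Perm (V n)) (f : V n → ℂ) :
    star (GP σ f) = GP σ.symm (fun v => (starRingEnd ℂ) (f (σ.symm v))) := by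
  ext v w
  simp only [Matrix.star_apply, GP_apply]
  by_cases h : v = σ w
  · rw [if_pos h, if_pos]
    · rw [show σ.symm v = w by rw [h]; exact σ.symm_apply_apply w, Complex.star_def]
    · rw [h]; exact (σ.symm_apply_apply w).symm
  · rw [if_neg h, if_neg, star_zero]
    intro hw
    exact h (by rw [hw]; exact (σ.apply_symm_apply v).symm)

lemma GP_unitary (σ : Equiv.Perm (V n)) (f : V n → ℂ) (hf : ∀ v, f v = 1 ∨ f v = -1) :
    GP σ f ∈ Matrix.unitaryGroup (V n) ℂ := by
  have hconj : ∀ v, (starRingEnd ℂ) (f v) = f v := by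
    intro v; rcases hf v with h | h <;> simp [h]
  have hsq : ∀ v, f v * f v = 1 := by
    intro v; rcases hf v with h | h <;> simp [h]
  constructor
  · rw [star_GP, GP_mul]
    rw [show σ.symm.trans σ = Equiv.refl _ from by ext v; simp]
    rw [← GP_refl_one]
    apply GP_congr rfl
    intro v; rw [hconj]; exact hsq _
  · rw [star_GP, GP_mul]
    rw [show σ.trans σ.symm = Equiv.refl _ from by ext v; simp]
    rw [← GP_refl_one]
    apply GP_congr rfl
    intro v; rw [σ.symm_apply_apply, hconj]; exact hsq _


/-- the z-sign function for one qubit -/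
noncomputable def zf (j : Fin n) (v : V n) : ℂ := if v j = 1 then -1 else 1

/-- the z-sign function for a set of qubits -/
noncomputable def fT (T : Finset (Fin n)) (v : V n) : ℂ :=
  ∏ j ∈ T, (if v j = 1 then (-1 : ℂ) else 1)

lemma fT_pm (T : Finset (Fin n)) (v : V n) : fT T v = 1 ∨ fT T v = -1 := by
  unfold fT
  refine Finset.prod_induction _ (fun z => z = 1 ∨ z = -1) ?_ (Or.inl rfl) ?_
  · rintro a b (ha | ha) (hb | hb) <;> simp [ha, hb]
  · intro j _; by_cases h : v j = 1 <;> simp [h]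

lemma fT_empty (v : V n) : fT (∅ : Finset (Fin n)) v = 1 := by simp [fT]

lemma fT_insert {a : Fin n} {T : Finset (Fin n)} (ha : a ∉ T) (v : V n) :
    fT (insert a T) v = zf a v * fT T v := by
  simp [fT, zf, Finset.prod_insert ha]

lemma XMat_eq (j : Fin n) : XMat n j = GP (sOf {j}) (fun _ => 1) := by
  ext v w
  simp only [XMat, GP, Matrix.of_apply]
  congr 1
  simp only [eq_iff_iff]
  constructor
  · rintro ⟨h1, h2⟩
    funext i
    by_cases hij : i = j
    · subst hij; simp [(fin2_ne_iff _ _).1 h1]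
    · simp [hij, (h2 i hij).symm]
  · intro h
    subst h
    constructor
    · simp [Ne.symm (fin2_add1_ne (v j))]
    · intro i hij; simp [hij]

lemma ZMat_eq (j : Fin n) : ZMat n j = GP (Equiv.refl _) (zf j) := by
  ext v w
  simp only [ZMat, GP, Matrix.of_apply, Equiv.refl_apply, zf]
  by_cases h : v = w
  · subst h; simp
  · rw [if_neg h]; simp [Ne.symm h]

lemma XMat_unitary (j : Fin n) : XMat n j ∈ Matrix.unitaryGroup (V n) ℂ := by
  rw [XMat_eq]; exact GP_unitary _ _ (fun v => Or.inl rfl)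

lemma ZMat_unitary (j : Fin n) : ZMat n j ∈ Matrix.unitaryGroup (V n) ℂ := by
  rw [ZMat_eq]; exact GP_unitary _ _ (fun v => by unfold zf; by_cases h : v j = 1 <;> simp [h])

/-- X and Z as unitary group elements -/
noncomputable def Xel (j : Fin n) : Matrix.unitaryGroup (V n) ℂ := ⟨XMat n j, XMat_unitary j⟩
noncomputable def Zel (j : Fin n) : Matrix.unitaryGroup (V n) ℂ := ⟨ZMat n j, ZMat_unitary j⟩

lemma Xel_mem (j : Fin n) : Xel j ∈ PauliGroup n :=
  Subgroup.subset_closure (Or.inr ⟨j, Or.inl rfl⟩)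

lemma Zel_mem (j : Fin n) : Zel j ∈ PauliGroup n :=
  Subgroup.subset_closure (Or.inr ⟨j, Or.inr rfl⟩)

/-- the candidate Pauli element, as a unitary -/
noncomputable def Qel (S T : Finset (Fin n)) : Matrix.unitaryGroup (V n) ℂ :=
  ⟨GP (sOf S) (fT T), GP_unitary _ _ (fT_pm T)⟩

lemma Qel_mem (S T : Finset (Fin n)) : Qel S T ∈ PauliGroup n := by
  have hZ : ∀ T' : Finset (Fin n), Qel ∅ T' ∈ PauliGroup n := by
    intro T'
    induction T' using Finset.induction_on with
    | empty =>
      have : Qel (∅ : Finset (Fin n)) ∅ = 1 := by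
        apply Subtype.ext
        show GP (sOf ∅) (fT ∅) = 1
        rw [← GP_refl_one]
        exact GP_congr sOf_empty fT_empty
      rw [this]; exact one_mem _
    | @insert a T' ha ih =>
      have : Qel (∅ : Finset (Fin n)) (insert a T') = Zel a * Qel ∅ T' := by
        apply Subtype.ext
        show GP (sOf ∅) (fT (insert a T')) = ZMat n a * GP (sOf ∅) (fT T')
        rw [ZMat_eq, GP_mul, sOf_empty]
        apply GP_congr (by simp)
        intro v
        simp [fT_insert ha v]
      rw [this]; exact mul_mem (Zel_mem a) ih
  have hX : ∀ S' : Finset (Fin n), Qel S' ∅ ∈ PauliGroup n := by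
    intro S'
    induction S' using Finset.induction_on with
    | empty => exact hZ ∅
    | @insert a S' ha ih =>
      have : Qel (insert a S') (∅ : Finset (Fin n)) = Xel a * Qel S' ∅ := by
        apply Subtype.ext
        show GP (sOf (insert a S')) (fT ∅) = XMat n a * GP (sOf S') (fT ∅)
        rw [XMat_eq, GP_mul, sOf_insert ha]
        apply GP_congr rfl
        intro v
        simp [fT_empty]
      rw [this]; exact mul_mem (Xel_mem a) ih
  have : Qel S T = Qel ∅ T * Qel S ∅ := by
    apply Subtype.ext
    show GP (sOf S) (fT T) = GP (sOf ∅) (fT T) * GP (sOf S) (fT ∅)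
    rw [GP_mul, sOf_empty]
    apply GP_congr (by simp)
    intro v
    simp [fT_empty]
  rw [this]; exact mul_mem (hZ T) (hX S)


lemma fin2_cases (x : Fin 2) : x = 0 ∨ x = 1 := by revert x; decide
lemma fin2_zf_flip (x : Fin 2) :
    (if x + 1 = 1 then (-1:ℂ) else 1) = -(if x = 1 then (-1:ℂ) else 1) := by
  rcases fin2_cases x with h | h <;> subst h
  · rw [if_pos (by decide), if_neg (by decide)]; try norm_num
  · rw [if_neg (by decide), if_pos (by decide)]; try norm_num

lemma zf_sOf (S : Finset (Fin n)) (k : Fin n) (v : V n) :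
    zf k (sOf S v) = (if k ∈ S then (-1:ℂ) else 1) * zf k v := by
  unfold zf
  by_cases h : k ∈ S
  · simp only [sOf_apply, if_pos h, fin2_zf_flip]; ring
  · simp only [sOf_apply, if_neg h]; ring

lemma fT_congr (T : Finset (Fin n)) {v w : V n} (h : ∀ j ∈ T, v j = w j) :
    fT T v = fT T w :=
  Finset.prod_congr rfl (fun j hj => by rw [h j hj])

lemma fT_flip (T : Finset (Fin n)) (k : Fin n) (v : V n) :
    fT T (sOf {k} v) = (if k ∈ T then (-1:ℂ) else 1) * fT T v := by
  by_cases h : k ∈ T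
  · rw [if_pos h, ← Finset.insert_erase h, fT_insert (Finset.notMem_erase k T),
      fT_insert (Finset.notMem_erase k T)]
    have h1 : zf k (sOf {k} v) = -(zf k v) := by
      unfold zf
      rw [sOf_apply, if_pos (Finset.mem_singleton_self k)]
      exact fin2_zf_flip _
    have h2 : fT (T.erase k) (sOf {k} v) = fT (T.erase k) v := by
      apply fT_congr
      intro j hj
      simp [Finset.ne_of_mem_erase hj]
    rw [h1, h2]; ring
  · rw [if_neg h, one_mul]
    apply fT_congr
    intro j hj
    have : j ≠ k := fun he => h (he ▸ hj)
    simp [this]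

lemma Q_comm_X (S T : Finset (Fin n)) (k : Fin n) :
    GP (sOf S) (fT T) * XMat n k
      = (if k ∈ T then (-1:ℂ) else 1) • (XMat n k * GP (sOf S) (fT T)) := by
  rw [XMat_eq, GP_mul, GP_mul, smul_GP]
  apply GP_congr (sOf_trans_comm S {k})
  intro v
  rw [fT_flip]
  by_cases h : k ∈ T <;> simp [h] <;> try ring

lemma Q_comm_Z (S T : Finset (Fin n)) (k : Fin n) :
    GP (sOf S) (fT T) * ZMat n k
      = (if k ∈ S then (-1:ℂ) else 1) • (ZMat n k * GP (sOf S) (fT T)) := by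
  rw [ZMat_eq, GP_mul, GP_mul, smul_GP]
  apply GP_congr (by simp)
  intro v
  simp only [Equiv.refl_apply]
  rw [zf_sOf]
  ring

lemma mul_GP_apply (A : Matrix (V n) (V n) ℂ) (σ : Equiv.Perm (V n)) (f : V n → ℂ)
    (v w : V n) : (A * GP σ f) v w = A v (σ.symm w) * f (σ.symm w) := by
  simp only [Matrix.mul_apply, GP_apply]
  rw [Finset.sum_eq_single (σ.symm w)]
  · rw [if_pos (σ.apply_symm_apply w).symm]
  · intro u _ hu
    rw [if_neg, mul_zero]
    intro hw
    exact hu (by rw [hw, Equiv.symm_apply_apply])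
  · intro h; exact absurd (Finset.mem_univ _) h

lemma GP_mul_apply (A : Matrix (V n) (V n) ℂ) (σ : Equiv.Perm (V n)) (f : V n → ℂ)
    (v w : V n) : (GP σ f * A) v w = f v * A (σ v) w := by
  simp only [Matrix.mul_apply, GP_apply]
  rw [Finset.sum_eq_single (σ v)]
  · rw [if_pos rfl]
  · intro u _ hu; rw [if_neg hu, zero_mul]
  · intro h; exact absurd (Finset.mem_univ _) h

lemma const_diag (g : V n → ℂ) (h : ∀ (j : Fin n) (v : V n), g (sOf {j} v) = g v)
    (v w : V n) : g v = g w := by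
  suffices H : ∀ s : Finset (Fin n), ∀ v w : V n, (∀ i, v i ≠ w i → i ∈ s) → g v = g w from
    H Finset.univ v w (fun i _ => Finset.mem_univ i)
  intro s
  induction s using Finset.induction_on with
  | empty =>
    intro v w hvw
    have : v = w := by
      funext i
      by_contra hi
      exact absurd (hvw i hi) (Finset.notMem_empty _)
    rw [this]
  | @insert a s ha ih =>
    intro v w hvw
    by_cases hva : v a = w a
    · refine ih v w (fun i hi => ?_)
      rcases Finset.mem_insert.1 (hvw i hi) with h' | h'
      · exact absurd (h' ▸ hva) (h' ▸ hi)
      · exact h'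
    · have h1 : g v = g (sOf {a} v) := (h a v).symm
      have h2 : g (sOf {a} v) = g w := by
        refine ih _ w (fun i hi => ?_)
        by_cases hia : i = a
        · exfalso
          apply hi
          subst hia
          simp only [sOf_apply, Finset.mem_singleton, if_pos rfl]
          exact ((fin2_ne_iff _ _).1 hva).symm
        · have : v i ≠ w i := by simpa [hia] using hi
          rcases Finset.mem_insert.1 (hvw i this) with h' | h'
          · exact absurd h' hia
          · exact h'
      rw [h1, h2]

lemma eq_smul_one (M : Matrix (V n) (V n) ℂ)
    (hX : ∀ j, M * XMat n j = XMat n j * M) (hZ : ∀ j, M * ZMat n j = ZMat n j * M) :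
    ∃ d : ℂ, M = d • 1 := by
  have hoff : ∀ v w : V n, v ≠ w → M v w = 0 := by
    intro v w hvw
    obtain ⟨j, hj⟩ := Function.ne_iff.1 hvw
    have h := hZ j
    have h2 : (M * ZMat n j) v w = (ZMat n j * M) v w := by rw [h]
    rw [ZMat_eq] at h2
    rw [mul_GP_apply, GP_mul_apply] at h2
    simp only [Equiv.refl_symm, Equiv.refl_apply] at h2
    have hzz : zf j w ≠ zf j v := by
      unfold zf
      rcases fin2_cases (v j) with h0 | h0 <;> rcases fin2_cases (w j) with h1 | h1 <;>
        simp_all <;> norm_num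
    have hfac : M v w * (zf j w - zf j v) = 0 := by
      rw [mul_sub, h2]; ring
    rcases mul_eq_zero.1 hfac with h' | h'
    · exact h'
    · exact absurd (sub_eq_zero.1 h') hzz
  have hdiag : ∀ (j : Fin n) (v : V n), M (sOf {j} v) (sOf {j} v) = M v v := by
    intro j v
    have h := hX j
    have h2 : (M * XMat n j) v (sOf {j} v) = (XMat n j * M) v (sOf {j} v) := by rw [h]
    rw [XMat_eq, mul_GP_apply, GP_mul_apply] at h2
    simp only [sOf_symm, sOf_sOf] at h2
    rw [mul_one, one_mul] at h2
    exact h2.symm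
  refine ⟨M (fun _ => 0) (fun _ => 0), ?_⟩
  ext v w
  by_cases hvw : v = w
  · subst hvw
    rw [Matrix.smul_apply, Matrix.one_apply_eq, smul_eq_mul, mul_one]
    exact const_diag (fun u => M u u) hdiag v _
  · rw [hoff v w hvw, Matrix.smul_apply, Matrix.one_apply_ne hvw, smul_eq_mul, mul_zero]


lemma XMat_sq (j : Fin n) : XMat n j * XMat n j = 1 := by
  rw [XMat_eq, GP_mul, sOf_trans_self, ← GP_refl_one]
  exact GP_congr rfl (fun v => one_mul 1)

lemma ZMat_sq (j : Fin n) : ZMat n j * ZMat n j = 1 := by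
  rw [ZMat_eq, GP_mul, ← GP_refl_one]
  refine GP_congr (by simp) (fun v => ?_)
  simp only [Equiv.refl_apply]
  unfold zf
  by_cases h : v j = 1 <;> simp [h]

lemma exists_sign (U : Matrix.unitaryGroup (V n) ℂ)
    (hU : ∀ P ∈ PauliGroup n, ∃ c : ℂ,
      (↑(U * P * U⁻¹ * P⁻¹) : Matrix (V n) (V n) ℂ) = c • 1)
    (P : Matrix.unitaryGroup (V n) ℂ) (hP : P ∈ PauliGroup n)
    (hP2 : (↑P : Matrix (V n) (V n) ℂ) * (↑P : Matrix (V n) (V n) ℂ) = 1) :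
    ∃ c : ℂ, c * c = 1 ∧
      (↑U : Matrix (V n) (V n) ℂ) * (↑P : Matrix (V n) (V n) ℂ)
        = c • ((↑P : Matrix (V n) (V n) ℂ) * (↑U : Matrix (V n) (V n) ℂ)) := by
  obtain ⟨c, hc⟩ := hU P hP
  set W : Matrix.unitaryGroup (V n) ℂ := U * P * U⁻¹ * P⁻¹ with hW
  have hgrp : U * P = W * (P * U) := by rw [hW]; group
  have hmat : (↑U : Matrix (V n) (V n) ℂ) * (↑P : Matrix (V n) (V n) ℂ)
      = c • ((↑P : Matrix (V n) (V n) ℂ) * (↑U : Matrix (V n) (V n) ℂ)) := by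
    have h := congrArg (fun W : Matrix.unitaryGroup (V n) ℂ =>
      (↑W : Matrix (V n) (V n) ℂ)) hgrp
    simp only [Submonoid.coe_mul] at h
    rw [hc] at h
    rw [h, smul_mul_assoc, one_mul]
  have hc2 : (↑U : Matrix (V n) (V n) ℂ) = (c * c) • (↑U : Matrix (V n) (V n) ℂ) := by
    calc (↑U : Matrix (V n) (V n) ℂ)
        = (↑U : Matrix (V n) (V n) ℂ)
            * ((↑P : Matrix (V n) (V n) ℂ) * (↑P : Matrix (V n) (V n) ℂ)) := by
          rw [hP2, mul_one]
      _ = ((↑U : Matrix (V n) (V n) ℂ) * (↑P : Matrix (V n) (V n) ℂ))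
            * (↑P : Matrix (V n) (V n) ℂ) := by rw [mul_assoc]
      _ = (c • ((↑P : Matrix (V n) (V n) ℂ) * (↑U : Matrix (V n) (V n) ℂ)))
            * (↑P : Matrix (V n) (V n) ℂ) := by rw [hmat]
      _ = c • ((↑P : Matrix (V n) (V n) ℂ)
            * ((↑U : Matrix (V n) (V n) ℂ) * (↑P : Matrix (V n) (V n) ℂ))) := by
          rw [smul_mul_assoc, mul_assoc]
      _ = c • ((↑P : Matrix (V n) (V n) ℂ)
            * (c • ((↑P : Matrix (V n) (V n) ℂ) * (↑U : Matrix (V n) (V n) ℂ)))) := by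
          rw [hmat]
      _ = (c * c) • (((↑P : Matrix (V n) (V n) ℂ) * (↑P : Matrix (V n) (V n) ℂ))
            * (↑U : Matrix (V n) (V n) ℂ)) := by
          rw [mul_smul_comm, smul_smul, mul_assoc]
      _ = (c * c) • (↑U : Matrix (V n) (V n) ℂ) := by rw [hP2, one_mul]
  have hU0 : (↑U : Matrix (V n) (V n) ℂ) ≠ 0 := by
    intro h0
    have h1 : (↑U : Matrix (V n) (V n) ℂ) * star (↑U : Matrix (V n) (V n) ℂ) = 1 :=
      Unitary.coe_mul_star_self U
    rw [h0, zero_mul] at h1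
    have := congrFun (congrFun h1 (fun _ => 0)) (fun _ => 0)
    rw [Matrix.zero_apply, Matrix.one_apply_eq] at this
    exact zero_ne_one this
  refine ⟨c, ?_, hmat⟩
  by_contra hne
  have h0 : ((c * c) - 1) • (↑U : Matrix (V n) (V n) ℂ) = 0 := by
    rw [sub_smul, one_smul, ← hc2, sub_self]
  rcases smul_eq_zero.1 h0 with h' | h'
  · exact hne (sub_eq_zero.1 h')
  · exact hU0 h'

end PauliAux

/-- If a unitary `U ∈ U(2^n)` is such that its group commutator with every element of the
Pauli group is a scalar multiple of the identity, then `U` is a scalar multiple of an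
element of the Pauli group: `U = c • Q` with `|c| = 1` and `Q` in the Pauli group. -/
theorem scalar_commutators_imp_pauli (n : ℕ) (hn : 1 ≤ n)
    (U : Matrix.unitaryGroup (Fin n → Fin 2) ℂ)
    (hU : ∀ P ∈ PauliGroup n, ∃ c : ℂ,
      (↑(U * P * U⁻¹ * P⁻¹) : Matrix (Fin n → Fin 2) (Fin n → Fin 2) ℂ)
        = c • (1 : Matrix (Fin n → Fin 2) (Fin n → Fin 2) ℂ)) :
    ∃ (c : ℂ) (Q : Matrix.unitaryGroup (Fin n → Fin 2) ℂ), ‖c‖ = 1 ∧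
      Q ∈ PauliGroup n ∧
      (U : Matrix (Fin n → Fin 2) (Fin n → Fin 2) ℂ)
        = c • (Q : Matrix (Fin n → Fin 2) (Fin n → Fin 2) ℂ) := by
  classical
  have hXc : ∀ j : Fin n, ∃ c : ℂ, c * c = 1 ∧
      (↑U : Matrix (Fin n → Fin 2) (Fin n → Fin 2) ℂ) * XMat n j
        = c • (XMat n j * (↑U : Matrix (Fin n → Fin 2) (Fin n → Fin 2) ℂ)) :=
    fun j => PauliAux.exists_sign U hU (PauliAux.Xel j) (PauliAux.Xel_mem j) (PauliAux.XMat_sq j)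
  have hZc : ∀ j : Fin n, ∃ c : ℂ, c * c = 1 ∧
      (↑U : Matrix (Fin n → Fin 2) (Fin n → Fin 2) ℂ) * ZMat n j
        = c • (ZMat n j * (↑U : Matrix (Fin n → Fin 2) (Fin n → Fin 2) ℂ)) :=
    fun j => PauliAux.exists_sign U hU (PauliAux.Zel j) (PauliAux.Zel_mem j) (PauliAux.ZMat_sq j)
  choose ε hε1 hε2 using hXc
  choose δ hδ1 hδ2 using hZc
  set S : Finset (Fin n) := Finset.univ.filter (fun j => δ j = -1) with hS
  set T : Finset (Fin n) := Finset.univ.filter (fun j => ε j = -1) with hT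
  set Q : Matrix.unitaryGroup (Fin n → Fin 2) ℂ := PauliAux.Qel S T with hQdef
  set Qm : Matrix (Fin n → Fin 2) (Fin n → Fin 2) ℂ := PauliAux.GP (PauliAux.sOf S) (PauliAux.fT T) with hQm
  have hQcoe : (↑Q : Matrix (Fin n → Fin 2) (Fin n → Fin 2) ℂ) = Qm := rfl
  have hsT : ∀ k, (if k ∈ T then (-1:ℂ) else 1) = ε k := by
    intro k
    by_cases h : ε k = -1
    · simp [hT, h]
    · have h1 : ε k = 1 := (mul_self_eq_one_iff.1 (hε1 k)).resolve_right h
      rw [if_neg (by simp [hT, h]), h1]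
  have hsS : ∀ k, (if k ∈ S then (-1:ℂ) else 1) = δ k := by
    intro k
    by_cases h : δ k = -1
    · simp [hS, h]
    · have h1 : δ k = 1 := (mul_self_eq_one_iff.1 (hδ1 k)).resolve_right h
      rw [if_neg (by simp [hS, h]), h1]
  have hQX : ∀ k, Qm * XMat n k = ε k • (XMat n k * Qm) := by
    intro k; rw [hQm, PauliAux.Q_comm_X, hsT]
  have hQZ : ∀ k, Qm * ZMat n k = δ k • (ZMat n k * Qm) := by
    intro k; rw [hQm, PauliAux.Q_comm_Z, hsS]
  -- star relations
  have hXst : ∀ k, star (XMat n k) = XMat n k := by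
    intro k
    rw [PauliAux.XMat_eq, PauliAux.star_GP]
    exact PauliAux.GP_congr rfl (fun v => by simp)
  have hZst : ∀ k, star (ZMat n k) = ZMat n k := by
    intro k
    rw [PauliAux.ZMat_eq, PauliAux.star_GP]
    refine PauliAux.GP_congr (by simp) (fun v => ?_)
    unfold PauliAux.zf
    by_cases h : v k = 1 <;> simp [h]
  have hεconj : ∀ k, (starRingEnd ℂ) (ε k) = ε k := by
    intro k
    rcases mul_self_eq_one_iff.1 (hε1 k) with h | h <;> simp [h]
  have hδconj : ∀ k, (starRingEnd ℂ) (δ k) = δ k := by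
    intro k
    rcases mul_self_eq_one_iff.1 (hδ1 k) with h | h <;> simp [h]
  have hsQX : ∀ k, star Qm * XMat n k = ε k • (XMat n k * star Qm) := by
    intro k
    have h := congrArg star (hQX k)
    rw [Matrix.star_mul, hXst, star_smul, Matrix.star_mul, hXst, Complex.star_def,
      hεconj k] at h
    have h' : XMat n k * star Qm = ε k • (star Qm * XMat n k) := h
    calc star Qm * XMat n k
        = (ε k * ε k) • (star Qm * XMat n k) := by rw [hε1 k, one_smul]
      _ = ε k • (ε k • (star Qm * XMat n k)) := by rw [smul_smul]
      _ = ε k • (XMat n k * star Qm) := by rw [← h']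
  have hsQZ : ∀ k, star Qm * ZMat n k = δ k • (ZMat n k * star Qm) := by
    intro k
    have h := congrArg star (hQZ k)
    rw [Matrix.star_mul, hZst, star_smul, Matrix.star_mul, hZst, Complex.star_def,
      hδconj k] at h
    have h' : ZMat n k * star Qm = δ k • (star Qm * ZMat n k) := h
    calc star Qm * ZMat n k
        = (δ k * δ k) • (star Qm * ZMat n k) := by rw [hδ1 k, one_smul]
      _ = δ k • (δ k • (star Qm * ZMat n k)) := by rw [smul_smul]
      _ = δ k • (ZMat n k * star Qm) := by rw [← h']
  set M : Matrix (Fin n → Fin 2) (Fin n → Fin 2) ℂ :=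
    (↑U : Matrix (Fin n → Fin 2) (Fin n → Fin 2) ℂ) * star Qm with hM
  have hMX : ∀ k, M * XMat n k = XMat n k * M := by
    intro k
    calc M * XMat n k
        = (↑U : Matrix (Fin n → Fin 2) (Fin n → Fin 2) ℂ) * (star Qm * XMat n k) := by
          rw [hM, mul_assoc]
      _ = (↑U : Matrix (Fin n → Fin 2) (Fin n → Fin 2) ℂ)
            * (ε k • (XMat n k * star Qm)) := by rw [hsQX]
      _ = ε k • (((↑U : Matrix (Fin n → Fin 2) (Fin n → Fin 2) ℂ) * XMat n k)
            * star Qm) := by rw [mul_smul_comm, mul_assoc]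
      _ = ε k • ((ε k • (XMat n k * (↑U : Matrix (Fin n → Fin 2) (Fin n → Fin 2) ℂ)))
            * star Qm) := by rw [hε2]
      _ = (ε k * ε k) • (XMat n k
            * ((↑U : Matrix (Fin n → Fin 2) (Fin n → Fin 2) ℂ) * star Qm)) := by
          rw [smul_mul_assoc, smul_smul, mul_assoc]
      _ = XMat n k * M := by rw [hε1 k, one_smul, hM]
  have hMZ : ∀ k, M * ZMat n k = ZMat n k * M := by
    intro k
    calc M * ZMat n k
        = (↑U : Matrix (Fin n → Fin 2) (Fin n → Fin 2) ℂ) * (star Qm * ZMat n k) := by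
          rw [hM, mul_assoc]
      _ = (↑U : Matrix (Fin n → Fin 2) (Fin n → Fin 2) ℂ)
            * (δ k • (ZMat n k * star Qm)) := by rw [hsQZ]
      _ = δ k • (((↑U : Matrix (Fin n → Fin 2) (Fin n → Fin 2) ℂ) * ZMat n k)
            * star Qm) := by rw [mul_smul_comm, mul_assoc]
      _ = δ k • ((δ k • (ZMat n k * (↑U : Matrix (Fin n → Fin 2) (Fin n → Fin 2) ℂ)))
            * star Qm) := by rw [hδ2]
      _ = (δ k * δ k) • (ZMat n k
            * ((↑U : Matrix (Fin n → Fin 2) (Fin n → Fin 2) ℂ) * star Qm)) := by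
          rw [smul_mul_assoc, smul_smul, mul_assoc]
      _ = ZMat n k * M := by rw [hδ1 k, one_smul, hM]
  obtain ⟨d, hd⟩ := PauliAux.eq_smul_one M hMX hMZ
  have hQst : star Qm * Qm = 1 := Unitary.coe_star_mul_self Q
  have hQst' : Qm * star Qm = 1 := Unitary.coe_mul_star_self Q
  have hUeq : (↑U : Matrix (Fin n → Fin 2) (Fin n → Fin 2) ℂ) = d • Qm := by
    have h1 : M * Qm = ↑U := by rw [hM, mul_assoc, hQst, mul_one]
    rw [← h1, hd, smul_mul_assoc, one_mul]
  have habs : ‖d‖ = 1 := by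
    have h1 : star (↑U : Matrix (Fin n → Fin 2) (Fin n → Fin 2) ℂ)
        * (↑U : Matrix (Fin n → Fin 2) (Fin n → Fin 2) ℂ) = 1 :=
      Unitary.coe_star_mul_self U
    rw [hUeq, star_smul, smul_mul_assoc, mul_smul_comm, smul_smul, hQst,
      Complex.star_def] at h1
    have h2 := congrFun (congrFun h1 (fun _ => 0)) (fun _ => 0)
    simp only [Matrix.smul_apply, Matrix.one_apply_eq, smul_eq_mul, mul_one] at h2
    have h3 : Complex.normSq d = 1 := by
      have h5 : (Complex.normSq d : ℂ) = 1 := by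
        rw [← Complex.mul_conj d, mul_comm]; exact h2
      exact_mod_cast h5
    have h4 : ‖d‖ ^ 2 = 1 := by rw [Complex.sq_norm, h3]
    nlinarith [norm_nonneg d]
  exact ⟨d, Q, habs, PauliAux.Qel_mem S T, hUeq⟩
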